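/- For the cubic medium symbol A(η) = [[(τ−μ)η₁²+μ, (λ+μ)η₁η₂],[(λ+μ)η₁η₂, (τ−μ)η₂²+μ]] with τ, μ > 0 and −2μ−τ < λ < τ, the matrix A(η) is positive definite for every η ∈ S¹. -/

import Mathlib

open Matrix

/-- The cubic medium symbol `A(η)` is positive definite for every `η ∈ S¹`. -/
theorem cubic_symbol_posDef
    (τ μ lam : ℝ) (hτ : 0 < τ) (hμ : 0 < μ)
    (hlaml : -2 * μ - τ < lam) (hlamu : lam < τ)
    (η₁ η₂ : ℝ) (hη : η₁ ^ 2 + η₂ ^ 2 = 1) :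
    (!![(τ - μ) * η₁ ^ 2 + μ, (lam + μ) * η₁ * η₂;
        (lam + μ) * η₁ * η₂, (τ - μ) * η₂ ^ 2 + μ] : Matrix (Fin 2) (Fin 2) ℝ).PosDef := by
  obtain ⟨a, ha⟩ : ∃ a : ℝ, a = (τ - μ) * η₁ ^ 2 + μ := ⟨_, rfl⟩
  obtain ⟨b, hb⟩ : ∃ b : ℝ, b = (lam + μ) * η₁ * η₂ := ⟨_, rfl⟩
  obtain ⟨c, hc⟩ : ∃ c : ℝ, c = (τ - μ) * η₂ ^ 2 + μ := ⟨_, rfl⟩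
  have haEq : a = τ * η₁ ^ 2 + μ * η₂ ^ 2 := by rw [ha]; linear_combination (-μ) * hη
  have hA : 0 < a := by
    rw [haEq]
    rcases eq_or_lt_of_le (sq_nonneg η₁) with h | h
    · have h2 : η₂ ^ 2 = 1 := by linarith
      rw [← h, h2]; linarith
    · nlinarith [mul_pos hτ h, mul_nonneg hμ.le (sq_nonneg η₂)]
  have hP : 0 < (τ + μ) ^ 2 - (lam + μ) ^ 2 := by nlinarith
  have h4s : 0 ≤ 1 - 4 * (η₁ * η₂) ^ 2 := by
    have : (η₁ ^ 2 - η₂ ^ 2) ^ 2 = 1 - 4 * (η₁ * η₂) ^ 2 := by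
      linear_combination (η₁ ^ 2 + η₂ ^ 2 + 1) * hη
    rw [← this]; exact sq_nonneg _
  have hdetEq : a * c - b ^ 2 =
      τ * μ + ((τ - μ) ^ 2 - (lam + μ) ^ 2) * (η₁ * η₂) ^ 2 := by
    rw [ha, hb, hc]; linear_combination μ * (τ - μ) * hη
  have hdet : 0 < a * c - b ^ 2 := by
    rw [hdetEq]
    rcases eq_or_lt_of_le (sq_nonneg (η₁ * η₂)) with h | h
    · rw [← h]; nlinarith [mul_pos hτ hμ]
    · nlinarith [mul_pos hP h, mul_nonneg (mul_pos hτ hμ).le h4s]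
  rw [← ha, ← hb, ← hc]
  rw [Matrix.posDef_iff_dotProduct_mulVec]
  constructor
  · ext i j
    fin_cases i <;> fin_cases j <;>
      simp [Matrix.conjTranspose, Matrix.vecHead, Matrix.vecTail, Matrix.transpose_apply]
  · intro x hx
    have h0 : x 0 ≠ 0 ∨ x 1 ≠ 0 := by
      by_contra h
      push_neg at h
      exact hx (funext fun i => by fin_cases i <;> simp [h.1, h.2])
    simp only [dotProduct, Matrix.mulVec, Fin.sum_univ_two, Matrix.cons_val_zero,
      Matrix.cons_val_one, Matrix.head_cons, Pi.star_apply, star_trivial,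
      Matrix.of_apply, Matrix.cons_val', Matrix.empty_val', Matrix.cons_val_fin_one,
      Matrix.vecHead, RCLike.inner_apply]
    rcases eq_or_ne (x 1) 0 with h1 | h1
    · have h2 : x 0 ≠ 0 := by tauto
      have hx2 : 0 < x 0 ^ 2 := by positivity
      rw [h1]
      nlinarith [mul_pos hA hx2]
    · have hx1 : 0 < x 1 ^ 2 := by positivity
      nlinarith [sq_nonneg (a * x 0 + b * x 1), mul_pos hdet hx1]
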